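/- Let C′, C, C″ be finite-dimensional real inner product spaces and δ′ : C′ → C, δ : C → C″ linear maps with δ ∘ δ′ = 0. Then C decomposes as the orthogonal direct sum C = range(δ′) ⊕ range(δ*) ⊕ (ker δ ∩ ker (δ′)*): the three subspaces are pairwise orthogonal and their sum is all of C. In particular, range(δ′) ∩ range(δ*) = {0}. -/

import Mathlib

/-- Discrete Hodge decomposition (Eckmann): for a cochain complex
`C′ →(δ′) C →(δ) C″` of finite-dimensional real inner product spaces with `δ ∘ δ′ = 0`,
the middle space decomposes orthogonally as
`C = range δ′ ⊕ range δ* ⊕ (ker δ ⊓ ker (δ′)*)`; in particular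
`range δ′ ⊓ range δ* = ⊥`. -/
theorem stmt12 {C' C C'' : Type*}
    [NormedAddCommGroup C'] [InnerProductSpace ℝ C'] [FiniteDimensional ℝ C']
    [NormedAddCommGroup C] [InnerProductSpace ℝ C] [FiniteDimensional ℝ C]
    [NormedAddCommGroup C''] [InnerProductSpace ℝ C''] [FiniteDimensional ℝ C'']
    (δ' : C' →ₗ[ℝ] C) (δ : C →ₗ[ℝ] C'')
    (h : δ ∘ₗ δ' = 0) :
    (LinearMap.range δ' ≤ (LinearMap.range (LinearMap.adjoint δ))ᗮ) ∧
      (LinearMap.range δ' ≤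
        (LinearMap.ker δ ⊓ LinearMap.ker (LinearMap.adjoint δ'))ᗮ) ∧
      (LinearMap.range (LinearMap.adjoint δ) ≤
        (LinearMap.ker δ ⊓ LinearMap.ker (LinearMap.adjoint δ'))ᗮ) ∧
      (LinearMap.range δ' ⊔ LinearMap.range (LinearMap.adjoint δ) ⊔
        (LinearMap.ker δ ⊓ LinearMap.ker (LinearMap.adjoint δ')) = ⊤) ∧
      (LinearMap.range δ' ⊓ LinearMap.range (LinearMap.adjoint δ) = ⊥) := by
  have hker1 : LinearMap.ker δ = (LinearMap.range (LinearMap.adjoint δ))ᗮ := by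
    ext x
    simp only [LinearMap.mem_ker, Submodule.mem_orthogonal]
    constructor
    · rintro hx u ⟨b, rfl⟩
      rw [LinearMap.adjoint_inner_left, hx, inner_zero_right]
    · intro hx
      rw [← inner_self_eq_zero (𝕜 := ℝ)]
      have := hx (LinearMap.adjoint δ (δ x)) ⟨δ x, rfl⟩
      rwa [LinearMap.adjoint_inner_left] at this
  have hker2 : LinearMap.ker (LinearMap.adjoint δ') = (LinearMap.range δ')ᗮ := by
    ext x
    simp only [LinearMap.mem_ker, Submodule.mem_orthogonal]
    constructor
    · rintro hx u ⟨a, rfl⟩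
      rw [← LinearMap.adjoint_inner_right, hx, inner_zero_right]
    · intro hx
      rw [← inner_self_eq_zero (𝕜 := ℝ)]
      have := hx (δ' (LinearMap.adjoint δ' x)) ⟨LinearMap.adjoint δ' x, rfl⟩
      rwa [← LinearMap.adjoint_inner_right] at this
  have h1 : LinearMap.range δ' ≤ (LinearMap.range (LinearMap.adjoint δ))ᗮ := by
    rw [← hker1]
    rintro x ⟨a, rfl⟩
    have : δ (δ' a) = 0 := by rw [← LinearMap.comp_apply, h]; rfl
    exact this
  have hK : LinearMap.ker δ ⊓ LinearMap.ker (LinearMap.adjoint δ') =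
      (LinearMap.range δ' ⊔ LinearMap.range (LinearMap.adjoint δ))ᗮ := by
    rw [hker1, hker2, Submodule.inf_orthogonal]
    exact congrArg _ (sup_comm _ _)
  have h2 : LinearMap.range δ' ≤
      (LinearMap.ker δ ⊓ LinearMap.ker (LinearMap.adjoint δ'))ᗮ := by
    rw [hK]
    exact le_trans (le_trans le_sup_left (Submodule.le_orthogonal_orthogonal _))
      (Submodule.orthogonal_le (le_refl _))
  have h3 : LinearMap.range (LinearMap.adjoint δ) ≤
      (LinearMap.ker δ ⊓ LinearMap.ker (LinearMap.adjoint δ'))ᗮ := by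
    rw [hK]
    exact le_trans (le_trans le_sup_right (Submodule.le_orthogonal_orthogonal _))
      (Submodule.orthogonal_le (le_refl _))
  refine ⟨h1, h2, h3, ?_, ?_⟩
  · rw [hK]
    exact Submodule.sup_orthogonal_of_hasOrthogonalProjection
  · rw [eq_bot_iff]
    rintro x ⟨hx1, hx2⟩
    have := h1 hx1
    rw [Submodule.mem_bot, ← inner_self_eq_zero (𝕜 := ℝ)]
    exact this x hx2
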